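/- Let Y have the Shiha density f_Y(y) = (ω/(ω+3η))·[ω + (2η + 8ωη·y)·e^{−ωy}]·e^{−ωy} for y ≥ 0, with ω, η > 0. Then X = e^{−Y} has density f_X(x) = (ω/(ω+3η))·[ω·x^(ω−1) + (2η − 8ωη·ln x)·x^(2ω−1)] on (0,1]. -/

import Mathlib

open MeasureTheory Real

lemma ush_image_Ici : (fun y : ℝ => Real.exp (-y)) '' Set.Ici 0 = Set.Ioc 0 1 := by
  ext x
  constructor
  · rintro ⟨y, hy, rfl⟩
    exact ⟨Real.exp_pos _, Real.exp_le_one_iff.mpr (neg_nonpos.mpr hy)⟩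
  · rintro ⟨hx0, hx1⟩
    exact ⟨-Real.log x, by simpa using Real.log_nonpos hx0.le hx1,
      by simp [Real.exp_log hx0]⟩

lemma ush_inj : Set.InjOn (fun y : ℝ => Real.exp (-y)) (Set.Ici 0) := by
  intro a _ b _ h
  have := Real.exp_injective h
  linarith [neg_injective this]

theorem ush_from_shiha (ω η : ℝ) (hω : 0 < ω) (hη : 0 < η) :
    Measure.map (fun y => Real.exp (-y))
      (volume.withDensity (fun y => ENNReal.ofReal (Set.indicator (Set.Ici 0)
        (fun y => ω / (ω + 3*η) * (ω + (2*η + 8*ω*η*y) * Real.exp (-ω*y)) * Real.exp (-ω*y)) y)))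
    = volume.withDensity (fun x => ENNReal.ofReal (Set.indicator (Set.Ioc 0 1)
        (fun x => ω / (ω + 3*η) * (ω * x ^ (ω-1) + (2*η - 8*ω*η*Real.log x) * x ^ (2*ω-1))) x)) := by
  have hgmeas : Measurable (fun y : ℝ => Real.exp (-y)) :=
    Real.measurable_exp.comp measurable_neg
  ext s hs
  rw [Measure.map_apply hgmeas hs, withDensity_apply _ (hgmeas hs), withDensity_apply _ hs]
  -- push ofReal inside the indicator
  have hind : ∀ (A : Set ℝ) (f : ℝ → ℝ) (y : ℝ),
      ENNReal.ofReal (Set.indicator A f y)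
        = Set.indicator A (fun y => ENNReal.ofReal (f y)) y := by
    intro A f y
    by_cases h : y ∈ A <;> simp [Set.indicator, h]
  simp only [hind]
  rw [lintegral_indicator measurableSet_Ici, lintegral_indicator measurableSet_Ioc,
    Measure.restrict_restrict measurableSet_Ici, Measure.restrict_restrict measurableSet_Ioc]
  -- rewrite the RHS domain as an image
  have himg : Set.Ioc 0 1 ∩ s
      = (fun y : ℝ => Real.exp (-y)) '' (Set.Ici 0 ∩ (fun y : ℝ => Real.exp (-y)) ⁻¹' s) := by
    rw [Set.image_inter_preimage, ush_image_Ici]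
  rw [himg]
  have hmeas : MeasurableSet (Set.Ici (0:ℝ) ∩ (fun y : ℝ => Real.exp (-y)) ⁻¹' s) :=
    measurableSet_Ici.inter (hgmeas hs)
  have hderiv : ∀ y ∈ Set.Ici (0:ℝ) ∩ (fun y : ℝ => Real.exp (-y)) ⁻¹' s,
      HasFDerivWithinAt (fun y : ℝ => Real.exp (-y))
        ((1 : ℝ →L[ℝ] ℝ).smulRight (-Real.exp (-y)))
        (Set.Ici 0 ∩ (fun y : ℝ => Real.exp (-y)) ⁻¹' s) y := by
    intro y _
    have : HasDerivAt (fun y : ℝ => Real.exp (-y)) (-Real.exp (-y)) y := by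
      simpa [Function.comp_def] using (Real.hasDerivAt_exp (-y)).comp y (hasDerivAt_neg y)
    exact this.hasFDerivAt.hasFDerivWithinAt
  have hinj : Set.InjOn (fun y : ℝ => Real.exp (-y))
      (Set.Ici 0 ∩ (fun y : ℝ => Real.exp (-y)) ⁻¹' s) :=
    ush_inj.mono Set.inter_subset_left
  rw [lintegral_image_eq_lintegral_abs_det_fderiv_mul volume hmeas hderiv hinj]
  apply setLIntegral_congr_fun hmeas
  intro y hy
  obtain ⟨hy0, -⟩ := hy
  dsimp only
  rw [ContinuousLinearMap.smulRight_one_eq_toSpanSingleton, ContinuousLinearMap.det_toSpanSingleton, abs_neg, abs_of_pos (Real.exp_pos _), ← ENNReal.ofReal_mul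
    (Real.exp_pos _).le]
  congr 1
  have hx : (0:ℝ) < Real.exp (-y) := Real.exp_pos _
  rw [Real.log_exp, Real.rpow_def_of_pos hx, Real.rpow_def_of_pos hx, Real.log_exp]
  have h1 : Real.exp (-y) * Real.exp (-y * (ω - 1)) = Real.exp (-ω * y) := by
    rw [← Real.exp_add]; congr 1; ring
  have h2 : Real.exp (-y) * Real.exp (-y * (2 * ω - 1))
      = Real.exp (-ω * y) * Real.exp (-ω * y) := by
    rw [← Real.exp_add, ← Real.exp_add]; congr 1; ring
  linear_combination (-(ω / (ω + 3*η) * ω)) * h1 + (-(ω / (ω + 3*η) * (2*η + 8*ω*η*y))) * h2
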